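/- Let P be a finite graded bowtie-free poset of rank n with 0̂ and 1̂ carrying a good H_n(0) action U_1,...,U_{n−1} on its maximal chains. If U_{i_1}···U_{i_r}(m) = m_0 and U_{j_1}···U_{j_s}(m) = m_0 are both restless expressions reaching the unique descent-free maximal chain m_0, then s_{i_1}s_{i_2}···s_{i_r} = s_{j_1}s_{j_2}···s_{j_s} in the symmetric group S_n. -/
import Mathlib


/-! Common definitions: graded posets, saturated/maximal chains, EL-labelings,
inversions and weak order on permutations, descent operators, flag vectors. -/

section Perm

/-- The inversion set `INV(v) = {(v j, v i) : i < j, v i > v j}` of a permutation of `Fin n`. -/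
def invSet {n : ℕ} (v : Equiv.Perm (Fin n)) : Set (Fin n × Fin n) :=
  {p | ∃ i j : Fin n, i < j ∧ v j = p.1 ∧ v i = p.2 ∧ v j < v i}

/-- The number of inversions of a permutation. -/
noncomputable def invCount {n : ℕ} (v : Equiv.Perm (Fin n)) : ℕ :=
  (invSet v).ncard

/-- The adjacent transposition swapping `i` and `i+1` (0-indexed) in `Fin n`
(junk value `1` if out of range). -/
def adjSwap (n : ℕ) (i : ℕ) : Equiv.Perm (Fin n) :=
  if h : i + 1 < n then Equiv.swap ⟨i, Nat.lt_of_succ_lt h⟩ ⟨i + 1, h⟩ else 1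

/-- One step of the right weak order: `v` is obtained from `w` by multiplying on the
right by an adjacent transposition which removes exactly one inversion. -/
def weakStep {n : ℕ} (w v : Equiv.Perm (Fin n)) : Prop :=
  ∃ i : ℕ, i + 1 < n ∧ v = w * adjSwap n i ∧ invCount v + 1 = invCount w

/-- Right weak order: `v ≤_R w` iff `v` is obtained from `w` by a sequence of
inversion-removing right multiplications by adjacent transpositions. -/
def leRW {n : ℕ} (v w : Equiv.Perm (Fin n)) : Prop :=
  Relation.ReflTransGen weakStep w v

end Perm

section Posets

variable {P : Type*}

/-- `c` (an `ℕ`-indexed sequence, constant equal to `y` from index `k` on) is a saturated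
chain `x = c 0 ⋖ c 1 ⋖ ⋯ ⋖ c k = y` of length `k` from `x` to `y`. -/
def IsSatChain [PartialOrder P] (k : ℕ) (c : ℕ → P) (x y : P) : Prop :=
  c 0 = x ∧ (∀ j, k ≤ j → c j = y) ∧ ∀ j, j < k → c j ⋖ c (j + 1)

/-- The chain `c` of length `k` has (weakly) increasing labels. -/
def IncreasingChain [PartialOrder P] (lab : P → P → ℤ) (k : ℕ) (c : ℕ → P) : Prop :=
  ∀ j, j + 1 < k → lab (c j) (c (j + 1)) ≤ lab (c (j + 1)) (c (j + 2))

/-- The label word of length-`k` chain `c` lexicographically strictly precedes that of `d`. -/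
def LexLt [PartialOrder P] (lab : P → P → ℤ) (k : ℕ) (c d : ℕ → P) : Prop :=
  ∃ i < k, (∀ j, j < i → lab (c j) (c (j + 1)) = lab (d j) (d (j + 1))) ∧
    lab (c i) (c (i + 1)) < lab (d i) (d (i + 1))

/-- `lab` is an EL-labeling: in every interval `[x,y]` (containing a saturated chain of
length `k`), there is a unique maximal chain with increasing labels, and it is
lexicographically strictly smaller than every other maximal chain of the interval. -/
def IsELLabeling [PartialOrder P] (lab : P → P → ℤ) : Prop :=
  ∀ x y : P, x < y → ∀ k : ℕ, (∃ c, IsSatChain k c x y) →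
    (∃! c, IsSatChain k c x y ∧ IncreasingChain lab k c) ∧
    ∀ c d, IsSatChain k c x y → IncreasingChain lab k c → IsSatChain k d x y → c ≠ d →
      LexLt lab k c d

/-- `rk` is a rank function making `P` a graded poset of rank `n`, with `rk ⊥ = 0`,
`rk ⊤ = n`, and ranks increasing by one along covers. -/
def IsGraded [PartialOrder P] [BoundedOrder P] (n : ℕ) (rk : P → ℕ) : Prop :=
  rk (⊥ : P) = 0 ∧ rk (⊤ : P) = n ∧ ∀ x y : P, x ⋖ y → rk y = rk x + 1

/-- `lab` is an `S_n` EL-labeling: an EL-labeling such that the label word of every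
maximal chain of `P` is a permutation of `{1, …, n}`. -/
def IsSnELLabeling [PartialOrder P] [BoundedOrder P] (n : ℕ) (lab : P → P → ℤ) : Prop :=
  IsELLabeling lab ∧
    ∀ c : ℕ → P, IsSatChain n c ⊥ ⊤ →
      ∃ σ : Equiv.Perm (Fin n), ∀ j : Fin n, lab (c j) (c ((j : ℕ) + 1)) = ((σ j : ℕ) : ℤ) + 1

/-- The maximal chains of a graded bounded poset of rank `n`. -/
abbrev MaxChain (n : ℕ) (P : Type*) [PartialOrder P] [BoundedOrder P] :=
  {c : ℕ → P // IsSatChain n c ⊥ ⊤}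

/-- The label word of `c` has a descent at position `i` (meaningful for `1 ≤ i ≤ n-1`):
the label of the `i`-th edge exceeds the label of the `(i+1)`-st edge. -/
def DescentAt [PartialOrder P] (lab : P → P → ℤ) (c : ℕ → P) (i : ℕ) : Prop :=
  lab (c i) (c (i + 1)) < lab (c (i - 1)) (c i)

/-- The maximal chain `c` has label word (the permutation) `σ`, where the label of the
`j`-th edge is `σ(j)` (written 1-indexed: the value `(σ j) + 1`). -/
def HasWord [PartialOrder P] (lab : P → P → ℤ) {n : ℕ} (c : ℕ → P)
    (σ : Equiv.Perm (Fin n)) : Prop :=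
  ∀ j : Fin n, lab (c j) (c ((j : ℕ) + 1)) = ((σ j : ℕ) : ℤ) + 1

/-- The defining property of the descent-removing operators `U_i` attached to an
`S_n` EL-labeling: `U i m` agrees with `m` away from rank `i` and has no descent at `i`. -/
def IsUSystem [PartialOrder P] [BoundedOrder P] (n : ℕ) (lab : P → P → ℤ)
    (U : ℕ → MaxChain n P → MaxChain n P) : Prop :=
  ∀ i, 1 ≤ i → i < n → ∀ m : MaxChain n P,
    (∀ j, j ≠ i → (U i m).1 j = m.1 j) ∧ ¬ DescentAt lab (U i m).1 i

/-- `m'` lies in the closure of the maximal chain `m` under the operators `U_i`. -/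
def InClosure [PartialOrder P] [BoundedOrder P] (n : ℕ)
    (U : ℕ → MaxChain n P → MaxChain n P) (m m' : MaxChain n P) : Prop :=
  ∃ l : List ℕ, (∀ i ∈ l, 1 ≤ i ∧ i < n) ∧ List.foldr U m l = m'

/-- `α_P(S)`: the number of chains of `P` whose rank set is exactly `S`. -/
noncomputable def alphaP [PartialOrder P] (rk : P → ℕ) (S : Finset ℕ) : ℕ :=
  Nat.card {t : Finset P // IsChain (· ≤ ·) (t : Set P) ∧ t.image rk = S ∧ t.card = S.card}

/-- The flag `h`-vector `β_P(S) = ∑_{T ⊆ S} (-1)^{|S - T|} α_P(T)`. -/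
noncomputable def betaP [PartialOrder P] (rk : P → ℕ) (S : Finset ℕ) : ℤ :=
  ∑ T ∈ S.powerset, (-1 : ℤ) ^ (S.card - T.card) * (alphaP rk T : ℤ)

/-- `P` is bowtie-free: there are no distinct `a, b, c, d` with `a` and `b` each
covering both `c` and `d`. -/
def BowtieFree (P : Type*) [PartialOrder P] : Prop :=
  ∀ a b c d : P, c ⋖ a → d ⋖ a → c ⋖ b → d ⋖ b → a = b ∨ c = d

/-- The operators `U_i`, `1 ≤ i ≤ n-1`, form a local 0-Hecke action on the maximal
chains: they are local at rank `i`, idempotent, commute at distance `≥ 2`, and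
satisfy the braid relations. -/
def IsLocalHeckeAction [PartialOrder P] [BoundedOrder P] (n : ℕ)
    (U : ℕ → MaxChain n P → MaxChain n P) : Prop :=
  (∀ i, 1 ≤ i → i < n → ∀ m : MaxChain n P, ∀ j, j ≠ i → (U i m).1 j = m.1 j) ∧
  (∀ i, 1 ≤ i → i < n → ∀ m, U i (U i m) = U i m) ∧
  (∀ i j, 1 ≤ i → i < n → 1 ≤ j → j < n → i + 2 ≤ j → ∀ m, U i (U j m) = U j (U i m)) ∧
  (∀ i, 1 ≤ i → i + 1 < n → ∀ m,
    U i (U (i + 1) (U i m)) = U (i + 1) (U i (U (i + 1) m)))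

/-- A good `H_n(0)` action: a local 0-Hecke action on the maximal chains such that for
every `S ⊆ [n-1]`, `α_P(S)` equals the number of maximal chains whose descent set
`{i : U_i m ≠ m}` is contained in `S` (equivalently, `ω F_P = ch χ_P`). -/
def IsGoodHeckeAction [PartialOrder P] [BoundedOrder P] (n : ℕ) (rk : P → ℕ)
    (U : ℕ → MaxChain n P → MaxChain n P) : Prop :=
  IsLocalHeckeAction n U ∧
    ∀ S : Finset ℕ, S ⊆ Finset.Icc 1 (n - 1) →
      alphaP rk S =
        Nat.card {m : MaxChain n P // ∀ i, 1 ≤ i → i < n → U i m ≠ m → i ∈ S}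

/-- An expression `U_{i_1} ⋯ U_{i_r} (m) = m'` (the list `l = [i_1, …, i_r]`, applied
right-to-left) is restless: every single application strictly changes the chain. -/
def Restless [PartialOrder P] [BoundedOrder P] {n : ℕ}
    (U : ℕ → MaxChain n P → MaxChain n P) (l : List ℕ) (m m' : MaxChain n P) : Prop :=
  List.foldr U m l = m' ∧
    ∀ i t, (i :: t) <:+ l → U i (List.foldr U m t) ≠ List.foldr U m t

/-- A subset of a lattice closed under join and meet. -/
def SublClosed [Lattice P] (t : Set P) : Prop :=
  ∀ a ∈ t, ∀ b ∈ t, a ⊔ b ∈ t ∧ a ⊓ b ∈ t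

/-- The sublattice generated by the set `s`. -/
def genSub [Lattice P] (s : Set P) : Set P :=
  ⋂₀ {t : Set P | s ⊆ t ∧ SublClosed t}

/-- The subset `t` is distributive (as a sublattice). -/
def DistribOn [Lattice P] (t : Set P) : Prop :=
  ∀ a ∈ t, ∀ b ∈ t, ∀ c ∈ t, a ⊓ (b ⊔ c) = (a ⊓ b) ⊔ (a ⊓ c)

/-- A lattice (graded, of rank `n`) is supersolvable if it has a maximal chain (an
M-chain) which together with any other chain generates a distributive sublattice. -/
def Supersolvable (n : ℕ) (P : Type*) [Lattice P] [BoundedOrder P] : Prop :=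
  ∃ M : MaxChain n P, ∀ c : Set P, IsChain (· ≤ ·) c →
    DistribOn (genSub (Set.range M.1 ∪ c))

end Posets

/-- For a good `H_n(0)` action on a finite graded bowtie-free poset,
any two restless expressions taking a maximal chain `m` to the unique descent-free
maximal chain `m₀` have equal products of adjacent transpositions in `S_n`. -/
theorem restless_words_give_same_permutation {P : Type*} [PartialOrder P]
    [BoundedOrder P] [Fintype P] {n : ℕ} (rk : P → ℕ) (hg : IsGraded n rk)
    (hb : BowtieFree P) (U : ℕ → MaxChain n P → MaxChain n P)
    (hU : IsGoodHeckeAction n rk U)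
    (m0 : MaxChain n P) (hm0 : ∀ i, 1 ≤ i → i < n → U i m0 = m0)
    (hm0uniq : ∀ m : MaxChain n P, (∀ i, 1 ≤ i → i < n → U i m = m) → m = m0)
    (m : MaxChain n P) (l1 l2 : List ℕ)
    (hl1 : ∀ i ∈ l1, 1 ≤ i ∧ i < n) (hl2 : ∀ i ∈ l2, 1 ≤ i ∧ i < n)
    (hr1 : Restless U l1 m m0) (hr2 : Restless U l2 m m0) :
    (l1.map fun i => adjSwap n (i - 1)).prod = (l2.map fun i => adjSwap n (i - 1)).prod := by
  classical
  obtain ⟨⟨loc, idem, comm, braid⟩, -⟩ := hU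
  -- chains are equal iff they agree everywhere
  have chain_ext : ∀ c d : MaxChain n P, (∀ j, c.1 j = d.1 j) → c = d := fun c d h =>
    Subtype.ext (funext h)
  have fix_of_eq_at : ∀ i, 1 ≤ i → i < n → ∀ c : MaxChain n P,
      (U i c).1 i = c.1 i → U i c = c := by
    intro i h1 h2 c h
    refine chain_ext _ _ fun j => ?_
    by_cases hj : j = i
    · rw [hj]; exact h
    · exact loc i h1 h2 c j hj
  have ne_at : ∀ i, 1 ≤ i → i < n → ∀ c : MaxChain n P,
      U i c ≠ c → (U i c).1 i ≠ c.1 i := fun i h1 h2 c hne h => hne (fix_of_eq_at i h1 h2 c h)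
  have cov : ∀ c : MaxChain n P, ∀ j, j < n → c.1 j ⋖ c.1 (j + 1) := fun c j hj => c.2.2.2 j hj
  -- the bowtie contradiction
  have core : ∀ i, 1 ≤ i → i + 1 < n → ∀ c : MaxChain n P, U i c ≠ c → U (i + 1) c ≠ c →
      ∀ D : MaxChain n P, D.1 i = (U i c).1 i → D.1 (i + 1) = (U (i + 1) c).1 (i + 1) →
      False := by
    intro i h1 h2 c hi hi1 D hDi hDi1
    have hin : i < n := by omega
    have hi11 : (1 : ℕ) ≤ i + 1 := by omega
    have hAtop : (U i c).1 (i + 1) = c.1 (i + 1) := loc i h1 hin c (i + 1) (by omega)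
    have hBbot : (U (i + 1) c).1 i = c.1 i := loc (i + 1) hi11 h2 c i (by omega)
    have c1 : c.1 i ⋖ c.1 (i + 1) := cov c i hin
    have cA : (U i c).1 i ⋖ c.1 (i + 1) := by
      have h := cov (U i c) i hin; rwa [hAtop] at h
    have cB : c.1 i ⋖ (U (i + 1) c).1 (i + 1) := by
      have h := cov (U (i + 1) c) i hin; rwa [hBbot] at h
    have cD : (U i c).1 i ⋖ (U (i + 1) c).1 (i + 1) := by
      have h := cov D i hin; rwa [hDi, hDi1] at h
    rcases hb (c.1 (i + 1)) ((U (i + 1) c).1 (i + 1)) (c.1 i) ((U i c).1 i) c1 cA cB cD with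
      h | h
    · exact ne_at (i + 1) hi11 h2 c hi1 h.symm
    · exact ne_at i h1 hin c hi h.symm
  have B1 : ∀ i, 1 ≤ i → i + 1 < n → ∀ c : MaxChain n P, U i c ≠ c → U (i + 1) c ≠ c →
      U (i + 1) (U i c) ≠ U i c := by
    intro i h1 h2 c hi hi1 hfix
    have hin : i < n := by omega
    have hbr := braid i h1 h2 c
    rw [hfix, idem i h1 hin c] at hbr
    -- hbr : U i c = U (i+1) (U i (U (i+1) c))
    have hDi : (U i (U (i + 1) c)).1 i = (U i c).1 i := by
      have l1 := loc (i + 1) (by omega) h2 (U i (U (i + 1) c)) i (by omega)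
      rw [← hbr] at l1
      exact l1.symm
    have hDi1 : (U i (U (i + 1) c)).1 (i + 1) = (U (i + 1) c).1 (i + 1) :=
      loc i h1 hin (U (i + 1) c) (i + 1) (by omega)
    exact core i h1 h2 c hi hi1 (U i (U (i + 1) c)) hDi hDi1
  have B1s : ∀ i, 1 ≤ i → i + 1 < n → ∀ c : MaxChain n P, U i c ≠ c → U (i + 1) c ≠ c →
      U i (U (i + 1) c) ≠ U (i + 1) c := by
    intro i h1 h2 c hi hi1 hfix
    have hin : i < n := by omega
    have hbr := braid i h1 h2 c
    rw [hfix, idem (i + 1) (by omega) h2 c] at hbr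
    -- hbr : U i (U (i+1) (U i c)) = U (i+1) c
    have hDi : (U (i + 1) (U i c)).1 i = (U i c).1 i :=
      loc (i + 1) (by omega) h2 (U i c) i (by omega)
    have hDi1 : (U (i + 1) (U i c)).1 (i + 1) = (U (i + 1) c).1 (i + 1) := by
      have l1 := loc i h1 hin (U (i + 1) (U i c)) (i + 1) (by omega)
      rw [hbr] at l1
      exact l1.symm
    exact core i h1 h2 c hi hi1 (U (i + 1) (U i c)) hDi hDi1
  have B2 : ∀ i, 1 ≤ i → i + 1 < n → ∀ c : MaxChain n P, U i c ≠ c → U (i + 1) c ≠ c →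
      U i (U (i + 1) (U i c)) ≠ U (i + 1) (U i c) := by
    intro i h1 h2 c hi hi1 hfix
    have hin : i < n := by omega
    have hbr := braid i h1 h2 c
    rw [hfix] at hbr
    -- hbr : U (i+1) (U i c) = U (i+1) (U i (U (i+1) c))
    have hDi1 : (U i (U (i + 1) c)).1 (i + 1) = (U (i + 1) c).1 (i + 1) :=
      loc i h1 hin (U (i + 1) c) (i + 1) (by omega)
    have hDi : (U i (U (i + 1) c)).1 i = (U i c).1 i := by
      have l1 := loc (i + 1) (by omega) h2 (U i (U (i + 1) c)) i (by omega)
      rw [← hbr] at l1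
      have l2 := loc (i + 1) (by omega) h2 (U i c) i (by omega)
      exact l1.symm.trans l2
    exact core i h1 h2 c hi hi1 (U i (U (i + 1) c)) hDi hDi1
  have B2s : ∀ i, 1 ≤ i → i + 1 < n → ∀ c : MaxChain n P, U i c ≠ c → U (i + 1) c ≠ c →
      U (i + 1) (U i (U (i + 1) c)) ≠ U i (U (i + 1) c) := by
    intro i h1 h2 c hi hi1 hfix
    have hin : i < n := by omega
    have hbr := braid i h1 h2 c
    rw [hfix] at hbr
    -- hbr : U i (U (i+1) (U i c)) = U i (U (i+1) c)
    have hDi : (U (i + 1) (U i c)).1 i = (U i c).1 i :=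
      loc (i + 1) (by omega) h2 (U i c) i (by omega)
    have hDi1 : (U (i + 1) (U i c)).1 (i + 1) = (U (i + 1) c).1 (i + 1) := by
      have l1 := loc i h1 hin (U (i + 1) (U i c)) (i + 1) (by omega)
      rw [hbr] at l1
      have l2 := loc i h1 hin (U (i + 1) c) (i + 1) (by omega)
      exact l1.symm.trans l2
    exact core i h1 h2 c hi hi1 (U (i + 1) (U i c)) hDi hDi1
  have Cc : ∀ i j, 1 ≤ i → i < n → 1 ≤ j → j < n → (i + 2 ≤ j ∨ j + 2 ≤ i) →
      ∀ c : MaxChain n P, U i c ≠ c → U j c ≠ c → U j (U i c) ≠ U i c := by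
    intro i j hi1 hi2 hj1 hj2 hd c hic hjc hfix
    have hcomm : U i (U j c) = U j (U i c) := by
      rcases hd with h | h
      · exact comm i j hi1 hi2 hj1 hj2 h c
      · exact (comm j i hj1 hj2 hi1 hi2 h c).symm
    rw [hfix] at hcomm
    apply hjc
    apply fix_of_eq_at j hj1 hj2 c
    have l1 := loc i hi1 hi2 (U j c) j (by omega)
    have l2 := loc i hi1 hi2 c j (by omega)
    rw [hcomm] at l1
    exact l1.symm.trans l2
  -- splitting a restless word at its first (innermost) letter
  have rconcat : ∀ (w : List ℕ) (a : ℕ) (x y : MaxChain n P),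
      Restless U (w ++ [a]) x y ↔ U a x ≠ x ∧ Restless U w (U a x) y := by
    intro w a x y
    constructor
    · rintro ⟨h1, h2⟩
      refine ⟨by simpa using h2 a [] ⟨w, rfl⟩, ?_, ?_⟩
      · rw [List.foldr_append] at h1; simpa using h1
      · intro b t hsuf
        obtain ⟨p, hp⟩ := hsuf
        have hsuf2 : (b :: (t ++ [a])) <:+ w ++ [a] := ⟨p, by rw [← hp]; simp⟩
        have h3 := h2 b (t ++ [a]) hsuf2
        rw [List.foldr_append] at h3
        simpa using h3
    · rintro ⟨ha, h1, h2⟩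
      constructor
      · rw [List.foldr_append]; simpa using h1
      · intro b t hsuf
        obtain ⟨p, hp⟩ := hsuf
        rcases List.eq_nil_or_concat' t with rfl | ⟨t', c, rfl⟩
        · have hpw : p ++ [b] = w ++ [a] := by simpa using hp
          obtain ⟨hw0, hba⟩ := List.append_inj' hpw (by simp)
          have hba' : b = a := by simpa using hba
          subst hba'
          simpa using ha
        · have hp2 : (p ++ b :: t') ++ [c] = w ++ [a] := by rw [← hp]; simp
          obtain ⟨hw0, hca⟩ := List.append_inj' hp2 (by simp)
          have hca' : c = a := by simpa using hca
          subst hca'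
          have h4 := h2 b t' ⟨p, hw0⟩
          rw [List.foldr_append]
          simpa using h4
  -- facts about adjacent transpositions
  have adj_eq : ∀ b : ℕ, 1 ≤ b → ∀ (h0 : b - 1 < n) (h1 : b < n),
      adjSwap n (b - 1) = Equiv.swap ⟨b - 1, h0⟩ ⟨b, h1⟩ := by
    intro b hb1 h0 h1
    have h : b - 1 + 1 < n := by omega
    have e : (⟨b - 1 + 1, h⟩ : Fin n) = ⟨b, h1⟩ := Fin.ext (show b - 1 + 1 = b by omega)
    unfold adjSwap
    rw [dif_pos h, e]
  have swap_braid : ∀ b : ℕ, 1 ≤ b → b + 1 < n →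
      adjSwap n (b - 1) * (adjSwap n b * adjSwap n (b - 1)) =
        adjSwap n b * (adjSwap n (b - 1) * adjSwap n b) := by
    intro b hb1 hb2
    have h0 : b - 1 < n := by omega
    have h1 : b < n := by omega
    have e1 : adjSwap n (b - 1) = Equiv.swap ⟨b - 1, h0⟩ ⟨b, h1⟩ := adj_eq b hb1 h0 h1
    have e2 : adjSwap n b = Equiv.swap ⟨b, h1⟩ ⟨b + 1, hb2⟩ := by
      unfold adjSwap
      rw [dif_pos hb2]
    have hxy : (⟨b - 1, h0⟩ : Fin n) ≠ ⟨b, h1⟩ := fun hh =>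
      absurd (show b - 1 = b from congrArg Fin.val hh) (by omega)
    have hyz : (⟨b, h1⟩ : Fin n) ≠ ⟨b + 1, hb2⟩ := fun hh =>
      absurd (show b = b + 1 from congrArg Fin.val hh) (by omega)
    have hxz : (⟨b - 1, h0⟩ : Fin n) ≠ ⟨b + 1, hb2⟩ := fun hh =>
      absurd (show b - 1 = b + 1 from congrArg Fin.val hh) (by omega)
    rw [e1, e2, ← mul_assoc, ← mul_assoc]
    rw [Equiv.swap_mul_swap_mul_swap hxy hxz]
    rw [Equiv.swap_comm (⟨b - 1, h0⟩ : Fin n) ⟨b, h1⟩,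
      Equiv.swap_comm (⟨b, h1⟩ : Fin n) ⟨b + 1, hb2⟩]
    rw [Equiv.swap_mul_swap_mul_swap hyz.symm hxz.symm]
    exact Equiv.swap_comm _ _
  have swap_disj : ∀ x y z w : Fin n, x ≠ z → x ≠ w → y ≠ z → y ≠ w →
      Equiv.swap x y * Equiv.swap z w = Equiv.swap z w * Equiv.swap x y := by
    intro x y z w hxz hxw hyz hyw
    have hd : Equiv.Perm.Disjoint (Equiv.swap x y) (Equiv.swap z w) := by
      intro u
      by_cases hux : u = x
      · subst hux; right; exact Equiv.swap_apply_of_ne_of_ne hxz hxw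
      · by_cases huy : u = y
        · subst huy; right; exact Equiv.swap_apply_of_ne_of_ne hyz hyw
        · left; exact Equiv.swap_apply_of_ne_of_ne hux huy
    exact hd.commute.eq
  have adj_comm : ∀ a b : ℕ, 1 ≤ a → a < n → 1 ≤ b → b < n → (a + 2 ≤ b ∨ b + 2 ≤ a) →
      adjSwap n (a - 1) * adjSwap n (b - 1) = adjSwap n (b - 1) * adjSwap n (a - 1) := by
    intro a b ha1 ha2 hb1 hb2 hd
    have h0a : a - 1 < n := by omega
    have h0b : b - 1 < n := by omega
    rw [adj_eq a ha1 h0a ha2, adj_eq b hb1 h0b hb2]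
    apply swap_disj
    · exact fun hh => absurd (show a - 1 = b - 1 from congrArg Fin.val hh) (by omega)
    · exact fun hh => absurd (show a - 1 = b from congrArg Fin.val hh) (by omega)
    · exact fun hh => absurd (show a = b - 1 from congrArg Fin.val hh) (by omega)
    · exact fun hh => absurd (show a = b from congrArg Fin.val hh) (by omega)
  have Wconcat : ∀ (l : List ℕ) (b : ℕ),
      ((l ++ [b]).map fun i => adjSwap n (i - 1)).prod =
        (l.map fun i => adjSwap n (i - 1)).prod * adjSwap n (b - 1) := by
    intro l b; simp
  -- the exchange lemma
  have E : ∀ (k : ℕ) (w : List ℕ) (A : MaxChain n P) (j : ℕ), w.length ≤ k →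
      (∀ b ∈ w, 1 ≤ b ∧ b < n) → 1 ≤ j → j < n → Restless U w A m0 → U j A ≠ A →
      ∃ v : List ℕ, (∀ b ∈ v, 1 ≤ b ∧ b < n) ∧ v.length + 1 = w.length ∧
        Restless U v (U j A) m0 ∧
        (v.map fun i => adjSwap n (i - 1)).prod * adjSwap n (j - 1) =
          (w.map fun i => adjSwap n (i - 1)).prod := by
    intro k
    induction k with
    | zero =>
      intro w A j hk hw hj1 hj2 hr hne
      exfalso
      have hwnil : w = [] := List.length_eq_zero_iff.mp (Nat.le_zero.mp hk)
      subst hwnil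
      have hA : A = m0 := hr.1
      rw [hA] at hne
      exact hne (hm0 j hj1 hj2)
    | succ k IH =>
      intro w A j hk hw hj1 hj2 hr hne
      rcases List.eq_nil_or_concat' w with rfl | ⟨w', a, rfl⟩
      · exfalso
        have hA : A = m0 := hr.1
        rw [hA] at hne
        exact hne (hm0 j hj1 hj2)
      obtain ⟨ha, hr'⟩ := (rconcat w' a A m0).mp hr
      obtain ⟨ha1, ha2⟩ := hw a (by simp)
      have hw' : ∀ b ∈ w', 1 ≤ b ∧ b < n := fun b hb => hw b (by simp [hb])
      have hlen : w'.length ≤ k := by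
        have h := hk
        simp only [List.length_append, List.length_cons, List.length_nil] at h
        omega
      by_cases haj : a = j
      · subst haj
        refine ⟨w', hw', ?_, hr', (Wconcat w' a).symm⟩
        simp only [List.length_append, List.length_cons, List.length_nil]
      rcases (show (a + 2 ≤ j ∨ j + 2 ≤ a) ∨ j = a + 1 ∨ a = j + 1 by omega) with
        hd | hd | hd
      · -- commuting letters
        have hstep1 : U j (U a A) ≠ U a A := Cc a j ha1 ha2 hj1 hj2 hd A ha hne
        obtain ⟨v1, hv1w, hv1len, hv1r, hv1p⟩ := IH w' (U a A) j hlen hw' hj1 hj2 hr' hstep1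
        have hcomm : U a (U j A) = U j (U a A) := by
          rcases hd with h | h
          · exact comm a j ha1 ha2 hj1 hj2 h A
          · exact (comm j a hj1 hj2 ha1 ha2 h A).symm
        have hstep2 : U a (U j A) ≠ U j A := Cc j a hj1 hj2 ha1 ha2 hd.symm A hne ha
        refine ⟨v1 ++ [a], ?_, ?_, ?_, ?_⟩
        · intro b hb
          rcases List.mem_append.mp hb with h | h
          · exact hv1w b h
          · have hba : b = a := by simpa using h
            subst hba; exact ⟨ha1, ha2⟩
        · simp only [List.length_append, List.length_cons, List.length_nil]
          omega
        · exact (rconcat v1 a (U j A) m0).mpr ⟨hstep2, by rw [hcomm]; exact hv1r⟩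
        · rw [Wconcat v1 a, Wconcat w' a]
          have hc := adj_comm a j ha1 ha2 hj1 hj2 hd
          calc ((v1.map fun i => adjSwap n (i - 1)).prod * adjSwap n (a - 1)) *
                adjSwap n (j - 1)
              = (v1.map fun i => adjSwap n (i - 1)).prod *
                  (adjSwap n (a - 1) * adjSwap n (j - 1)) := by rw [mul_assoc]
            _ = (v1.map fun i => adjSwap n (i - 1)).prod *
                  (adjSwap n (j - 1) * adjSwap n (a - 1)) := by rw [hc]
            _ = ((v1.map fun i => adjSwap n (i - 1)).prod * adjSwap n (j - 1)) *
                  adjSwap n (a - 1) := by rw [mul_assoc]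
            _ = (w'.map fun i => adjSwap n (i - 1)).prod * adjSwap n (a - 1) := by rw [hv1p]
      · -- adjacent letters, j = a + 1
        subst hd
        have hstep1 : U (a + 1) (U a A) ≠ U a A := B1 a ha1 hj2 A ha hne
        obtain ⟨v1, hv1w, hv1len, hv1r, hv1p⟩ :=
          IH w' (U a A) (a + 1) hlen hw' hj1 hj2 hr' hstep1
        have hstep2 : U a (U (a + 1) (U a A)) ≠ U (a + 1) (U a A) := B2 a ha1 hj2 A ha hne
        have hv1len' : v1.length ≤ k := by omega
        obtain ⟨v2, hv2w, hv2len, hv2r, hv2p⟩ :=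
          IH v1 (U (a + 1) (U a A)) a hv1len' hv1w ha1 ha2 hv1r hstep2
        have hbr : U a (U (a + 1) (U a A)) = U (a + 1) (U a (U (a + 1) A)) :=
          braid a ha1 hj2 A
        have s1 : U a (U (a + 1) A) ≠ U (a + 1) A := B1s a ha1 hj2 A ha hne
        have s2 : U (a + 1) (U a (U (a + 1) A)) ≠ U a (U (a + 1) A) := B2s a ha1 hj2 A ha hne
        refine ⟨(v2 ++ [a + 1]) ++ [a], ?_, ?_, ?_, ?_⟩
        · intro b hb
          rcases List.mem_append.mp hb with h | h
          · rcases List.mem_append.mp h with h' | h'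
            · exact hv2w b h'
            · have hba : b = a + 1 := by simpa using h'
              subst hba; exact ⟨hj1, hj2⟩
          · have hba : b = a := by simpa using h
            subst hba; exact ⟨ha1, ha2⟩
        · simp only [List.length_append, List.length_cons, List.length_nil]
          omega
        · refine (rconcat (v2 ++ [a + 1]) a (U (a + 1) A) m0).mpr ⟨s1, ?_⟩
          refine (rconcat v2 (a + 1) (U a (U (a + 1) A)) m0).mpr ⟨s2, ?_⟩
          rw [hbr] at hv2r
          exact hv2r
        · rw [Wconcat (v2 ++ [a + 1]) a, Wconcat v2 (a + 1), Wconcat w' a]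
          simp only [Nat.add_sub_cancel] at hv1p ⊢
          have hbp := swap_braid a ha1 hj2
          calc (((v2.map fun i => adjSwap n (i - 1)).prod * adjSwap n a) *
                  adjSwap n (a - 1)) * adjSwap n a
              = (v2.map fun i => adjSwap n (i - 1)).prod *
                  (adjSwap n a * (adjSwap n (a - 1) * adjSwap n a)) := by
                simp only [mul_assoc]
            _ = (v2.map fun i => adjSwap n (i - 1)).prod *
                  (adjSwap n (a - 1) * (adjSwap n a * adjSwap n (a - 1))) := by rw [← hbp]
            _ = (((v2.map fun i => adjSwap n (i - 1)).prod * adjSwap n (a - 1)) *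
                  adjSwap n a) * adjSwap n (a - 1) := by simp only [mul_assoc]
            _ = ((v1.map fun i => adjSwap n (i - 1)).prod * adjSwap n a) *
                  adjSwap n (a - 1) := by rw [hv2p]
            _ = (w'.map fun i => adjSwap n (i - 1)).prod * adjSwap n (a - 1) := by
                rw [hv1p]
      · -- adjacent letters, a = j + 1
        subst hd
        have hstep1 : U j (U (j + 1) A) ≠ U (j + 1) A := B1s j hj1 ha2 A hne ha
        obtain ⟨v1, hv1w, hv1len, hv1r, hv1p⟩ :=
          IH w' (U (j + 1) A) j hlen hw' hj1 hj2 hr' hstep1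
        have hstep2 : U (j + 1) (U j (U (j + 1) A)) ≠ U j (U (j + 1) A) := B2s j hj1 ha2 A hne ha
        have hv1len' : v1.length ≤ k := by omega
        obtain ⟨v2, hv2w, hv2len, hv2r, hv2p⟩ :=
          IH v1 (U j (U (j + 1) A)) (j + 1) hv1len' hv1w ha1 ha2 hv1r hstep2
        have hbr : U j (U (j + 1) (U j A)) = U (j + 1) (U j (U (j + 1) A)) :=
          braid j hj1 ha2 A
        have s1 : U (j + 1) (U j A) ≠ U j A := B1 j hj1 ha2 A hne ha
        have s2 : U j (U (j + 1) (U j A)) ≠ U (j + 1) (U j A) := B2 j hj1 ha2 A hne ha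
        refine ⟨(v2 ++ [j]) ++ [j + 1], ?_, ?_, ?_, ?_⟩
        · intro b hb
          rcases List.mem_append.mp hb with h | h
          · rcases List.mem_append.mp h with h' | h'
            · exact hv2w b h'
            · have hba : b = j := by simpa using h'
              subst hba; exact ⟨hj1, hj2⟩
          · have hba : b = j + 1 := by simpa using h
            subst hba; exact ⟨ha1, ha2⟩
        · simp only [List.length_append, List.length_cons, List.length_nil]
          omega
        · refine (rconcat (v2 ++ [j]) (j + 1) (U j A) m0).mpr ⟨s1, ?_⟩
          refine (rconcat v2 j (U (j + 1) (U j A)) m0).mpr ⟨s2, ?_⟩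
          rw [hbr]
          exact hv2r
        · rw [Wconcat (v2 ++ [j]) (j + 1), Wconcat v2 j, Wconcat w' (j + 1)]
          simp only [Nat.add_sub_cancel] at hv2p ⊢
          have hbp := swap_braid j hj1 ha2
          calc (((v2.map fun i => adjSwap n (i - 1)).prod * adjSwap n (j - 1)) *
                  adjSwap n j) * adjSwap n (j - 1)
              = (v2.map fun i => adjSwap n (i - 1)).prod *
                  (adjSwap n (j - 1) * (adjSwap n j * adjSwap n (j - 1))) := by
                simp only [mul_assoc]
            _ = (v2.map fun i => adjSwap n (i - 1)).prod *
                  (adjSwap n j * (adjSwap n (j - 1) * adjSwap n j)) := by rw [hbp]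
            _ = (((v2.map fun i => adjSwap n (i - 1)).prod * adjSwap n j) *
                  adjSwap n (j - 1)) * adjSwap n j := by simp only [mul_assoc]
            _ = ((v1.map fun i => adjSwap n (i - 1)).prod * adjSwap n (j - 1)) *
                  adjSwap n j := by rw [hv2p]
            _ = (w'.map fun i => adjSwap n (i - 1)).prod * adjSwap n j := by rw [hv1p]
  -- main induction
  have MAIN : ∀ (k : ℕ) (mm : MaxChain n P) (L1 L2 : List ℕ), L1.length ≤ k →
      (∀ i ∈ L1, 1 ≤ i ∧ i < n) → (∀ i ∈ L2, 1 ≤ i ∧ i < n) →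
      Restless U L1 mm m0 → Restless U L2 mm m0 →
      (L1.map fun i => adjSwap n (i - 1)).prod = (L2.map fun i => adjSwap n (i - 1)).prod := by
    intro k
    induction k with
    | zero =>
      intro mm L1 L2 hk h1 h2 hr1' hr2'
      have hL1 : L1 = [] := List.length_eq_zero_iff.mp (Nat.le_zero.mp hk)
      subst hL1
      have hmm : mm = m0 := hr1'.1
      rcases List.eq_nil_or_concat' L2 with rfl | ⟨w2, a, rfl⟩
      · rfl
      · exfalso
        obtain ⟨ha, -⟩ := (rconcat w2 a mm m0).mp hr2'
        obtain ⟨ha1, ha2⟩ := h2 a (by simp)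
        rw [hmm] at ha
        exact ha (hm0 a ha1 ha2)
    | succ k IH =>
      intro mm L1 L2 hk h1 h2 hr1' hr2'
      rcases List.eq_nil_or_concat' L1 with rfl | ⟨w1, i, rfl⟩
      · have hmm : mm = m0 := hr1'.1
        rcases List.eq_nil_or_concat' L2 with rfl | ⟨w2, a, rfl⟩
        · rfl
        · exfalso
          obtain ⟨ha, -⟩ := (rconcat w2 a mm m0).mp hr2'
          obtain ⟨ha1, ha2⟩ := h2 a (by simp)
          rw [hmm] at ha
          exact ha (hm0 a ha1 ha2)
      · obtain ⟨hi, hrw1⟩ := (rconcat w1 i mm m0).mp hr1'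
        obtain ⟨hi1, hi2⟩ := h1 i (by simp)
        have hw1 : ∀ b ∈ w1, 1 ≤ b ∧ b < n := fun b hb => h1 b (by simp [hb])
        have hlen1 : w1.length ≤ k := by
          have h := hk
          simp only [List.length_append, List.length_cons, List.length_nil] at h
          omega
        obtain ⟨v, hvw, hvlen, hvr, hvp⟩ := E L2.length L2 mm i le_rfl h2 hi1 hi2 hr2' hi
        have hmain := IH (U i mm) w1 v hlen1 hw1 hvw hrw1 hvr
        rw [Wconcat w1 i, hmain]
        exact hvp
  exact MAIN l1.length m l1 l2 le_rfl hl1 hl2 hr1 hr2
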